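/- Let φ be a Leibniz 2-cocycle on the Witt algebra with φ(L_0, L_n) = 0 for all n ≠ 0 and φ(L_{-1}, L_1) = φ(L_1, L_{-1}) = 0, normalized by φ(L_2, L_{-2}) = 1/2. Then φ(L_n, L_{-n}) = (n³−n)/12 for all n ∈ ℤ. -/

import Mathlib

abbrev W : Type := ℤ →₀ ℂ

noncomputable def Lw (n : ℤ) : W := Finsupp.single n 1

/-- The bilinear bracket of the Witt algebra: `[L n, L m] = (m - n) • L (n+m)`. -/
noncomputable def bkW : W →ₗ[ℂ] W →ₗ[ℂ] W :=
  Finsupp.lsum ℂ fun n => LinearMap.toSpanSingleton ℂ (W →ₗ[ℂ] W)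
    (Finsupp.lsum ℂ fun m => LinearMap.toSpanSingleton ℂ W (((m : ℂ) - n) • Lw (n + m)))

/-- `φ` is a Leibniz 2-cocycle on the Witt algebra. -/
def IsLeibnizCocycleW (φ : W →ₗ[ℂ] W →ₗ[ℂ] ℂ) : Prop :=
  ∀ x y z : W, φ x (bkW y z) = φ (bkW x y) z - φ (bkW x z) y

lemma bk_single (n m : ℤ) : bkW (Lw n) (Lw m) = ((m : ℂ) - n) • Lw (n + m) := by
  unfold bkW Lw
  rw [Finsupp.lsum_single, LinearMap.toSpanSingleton_apply, one_smul,
    Finsupp.lsum_single, LinearMap.toSpanSingleton_apply, one_smul]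

lemma coc (φ : W →ₗ[ℂ] W →ₗ[ℂ] ℂ) (hco : IsLeibnizCocycleW φ) (m n p : ℤ) :
    ((p : ℂ) - n) * φ (Lw m) (Lw (n + p)) =
      ((n : ℂ) - m) * φ (Lw (m + n)) (Lw p) - ((p : ℂ) - m) * φ (Lw (m + p)) (Lw n) := by
  have := hco (Lw m) (Lw n) (Lw p)
  simpa [bk_single, map_smul, LinearMap.smul_apply, smul_eq_mul] using this

theorem stmt7 (φ : W →ₗ[ℂ] W →ₗ[ℂ] ℂ) (hco : IsLeibnizCocycleW φ)
    (h0 : ∀ n : ℤ, n ≠ 0 → φ (Lw 0) (Lw n) = 0)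
    (h1 : φ (Lw (-1)) (Lw 1) = 0) (h2 : φ (Lw 1) (Lw (-1)) = 0)
    (hnorm : φ (Lw 2) (Lw (-2)) = 1 / 2) :
    ∀ n : ℤ, φ (Lw n) (Lw (-n)) = ((n : ℂ) ^ 3 - (n : ℂ)) / 12 := by
  have f0 : φ (Lw 0) (Lw 0) = 0 := by
    have h := coc φ hco 0 1 (-1)
    norm_num [h1, h2] at h
    exact h
  -- antisymmetry of the diagonal values
  have anti : ∀ n : ℤ, φ (Lw (-n)) (Lw n) = - φ (Lw n) (Lw (-n)) := by
    intro n
    rcases eq_or_ne n 0 with rfl | hn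
    · simp [f0]
    · have h := coc φ hco 0 n (-n)
      simp only [add_neg_cancel, zero_add, Int.cast_neg, zero_sub] at h
      rw [f0] at h
      have hn' : (n : ℂ) ≠ 0 := Int.cast_ne_zero.mpr hn
      have h' : (n : ℂ) * (φ (Lw (-n)) (Lw n) + φ (Lw n) (Lw (-n))) = 0 := by
        linear_combination -h
      rcases mul_eq_zero.mp h' with hc | hc
      · exact absurd hc hn'
      · linear_combination hc
  -- the recursion
  have hrec : ∀ m : ℤ, ((m : ℂ) - 1) * φ (Lw (m + 1)) (Lw (-(m + 1))) =
      ((m : ℂ) + 2) * φ (Lw m) (Lw (-m)) := by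
    intro m
    have h := coc φ hco m 1 (-m - 1)
    have e1 : (1 : ℤ) + (-m - 1) = -m := by ring
    have e2 : m + (-m - 1) = -1 := by ring
    have e3 : -(m + 1) = -m - 1 := by ring
    rw [e1, e2, h1] at h
    rw [e3]
    push_cast at h ⊢
    linear_combination h
  -- values at natural numbers ≥ 2
  have key : ∀ k : ℕ, φ (Lw ((k : ℤ) + 2)) (Lw (-((k : ℤ) + 2))) =
      (((k : ℂ) + 2) ^ 3 - ((k : ℂ) + 2)) / 12 := by
    intro k
    induction k with
    | zero => norm_num [hnorm]
    | succ k ih =>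
        have h := hrec ((k : ℤ) + 2)
        have e : ((k : ℤ) + 2) + 1 = ((k + 1 : ℕ) : ℤ) + 2 := by push_cast; ring
        rw [e, ih] at h
        have hk1 : ((k : ℂ) + 1) ≠ 0 := Nat.cast_add_one_ne_zero k
        apply mul_left_cancel₀ hk1
        push_cast at h ⊢
        linear_combination h
  intro n
  obtain ⟨k, rfl | rfl⟩ := Int.eq_nat_or_neg n
  · match k with
    | 0 => simpa using f0
    | 1 => norm_num [h2]
    | (k + 2) =>
        have h := key k
        push_cast at h ⊢
        convert h using 3 <;> push_cast <;> ring
  · have hpos : φ (Lw (k : ℤ)) (Lw (-(k : ℤ))) = (((k : ℤ) : ℂ) ^ 3 - ((k : ℤ) : ℂ)) / 12 := by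
      match k with
      | 0 => simpa using f0
      | 1 => norm_num [h2]
      | (k + 2) =>
          have h := key k
          push_cast at h ⊢
          convert h using 3 <;> push_cast <;> ring
    rw [neg_neg, anti (k : ℤ), hpos]
    push_cast
    ring
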